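/- arXiv:2212.11452 — 2 statements merged into one kernel-verified Lean document; each statement's English description precedes it below -/
import Mathlib

section
/- Let p ≥ 3 be an integer and τ ∈ (−1/(p−1), 1). If B is a connected open subset of one of the intervals (−∞, −E_∞), (−E_∞, E_∞), or (E_∞, ∞), then for every r ∈ (−1,1), sup_{u₁,u₂ ∈ B} Σ₂^{p,τ}(r,u₁,u₂) ≤ sup_{u ∈ B} Σ₂^{p,τ}(r,u,u). -/
noncomputable section

/-- The function `I_τ(u)` from the explicit formula for the logarithmic potential. -/
def Itau (τ u : ℝ) : ℝ :=
  if τ = 0 then -Real.log |u| + u ^ 2 / 2 - 1 / 2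
  else u ^ 2 / (2 * (1 + τ)) - |u| * (|u| - Real.sqrt (u ^ 2 - 4 * τ)) / (4 * τ)
    - Real.log ((|u| + Real.sqrt (u ^ 2 - 4 * τ)) / 2)

/-- The logarithmic potential `φ_τ` of the uniform measure on the ellipse `E_τ`. -/
def phiTau (τ u : ℝ) : ℝ :=
  u ^ 2 / (2 * (1 + τ)) - 1 / 2 - if 1 + τ < |u| then Itau τ u else 0

/-- `φ_{τ,p}(u) = φ_τ(u/√(p(p-1)))`. -/
def phiTauP (p : ℕ) (τ u : ℝ) : ℝ := phiTau τ (u / Real.sqrt (p * ((p : ℝ) - 1)))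

/-- The annealed complexity function `Σ^{p,τ}`. -/
def SigmaOne (p : ℕ) (τ u : ℝ) : ℝ :=
  1 / 2 + Real.log ((p : ℝ) - 1) / 2 - u ^ 2 / (2 * p * (1 + ((p : ℝ) - 1) * τ)) + phiTauP p τ u

/-- The threshold `E_∞ = √(p(p-1)(1+τ))`. -/
def Einf (p : ℕ) (τ : ℝ) : ℝ := Real.sqrt (p * ((p : ℝ) - 1) * (1 + τ))

/-- The critical value `τ_p`. -/
def tauCrit (p : ℕ) : ℝ :=
  (((p : ℝ) - 2) - Real.log ((p : ℝ) - 1)) /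
    (((p : ℝ) - 1) * Real.log ((p : ℝ) - 1) - ((p : ℝ) - 2))

/-- `θ_{p,τ}`. -/
def thetaPT (p : ℕ) (τ : ℝ) : ℝ :=
  Real.log ((p : ℝ) - 1) / 2 - ((p : ℝ) - 2) * (1 + τ) / (2 * (1 + ((p : ℝ) - 1) * τ))

/-- `h(r) = (1/2) log((1-r²)/(1-r^{2p-2}))`. -/
def hFun (p : ℕ) (r : ℝ) : ℝ := Real.log ((1 - r ^ 2) / (1 - r ^ (2 * p - 2))) / 2

/-- `b(r)`. -/
def bFun (p : ℕ) (τ r : ℝ) : ℝ :=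
  (1 - r ^ (2 * p - 2)) ^ 2 - ((p : ℝ) - 1) ^ 2 * τ ^ 2 * r ^ (2 * (p - 2)) * (1 - r ^ 2) ^ 2

/-- `k₁(r)`. -/
def k1Fun (p : ℕ) (τ r : ℝ) : ℝ :=
  bFun p τ r + r ^ (2 * p - 2) * (1 - r ^ (2 * p - 2) + τ * ((p : ℝ) - 1) * (1 - r ^ 2))

/-- `k₂(r)`. -/
def k2Fun (p : ℕ) (τ r : ℝ) : ℝ :=
  -(r ^ p * (1 - r ^ (2 * p - 2))) - τ * ((p : ℝ) - 1) * r ^ (3 * p - 4) * (1 - r ^ 2)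

/-- The two-point complexity function `Σ₂^{p,τ}(r,u₁,u₂)`. -/
def SigmaTwo (p : ℕ) (τ r u₁ u₂ : ℝ) : ℝ :=
  1 + Real.log ((p : ℝ) - 1) + hFun p r
    - (k1Fun p τ r * u₁ ^ 2 + 2 * k2Fun p τ r * u₁ * u₂ + k1Fun p τ r * u₂ ^ 2) /
        (2 * p * (1 + ((p : ℝ) - 1) * τ) * bFun p τ r)
    + phiTauP p τ u₁ + phiTauP p τ u₂

/-- A subset of `ℝ` is nice if it is a finite union of open intervals. -/
def NiceSet (B : Set ℝ) : Prop := ∃ s : Finset (ℝ × ℝ), B = ⋃ q ∈ s, Set.Ioo q.1 q.2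


lemma itau_abs (τ u : ℝ) : Itau τ |u| = Itau τ u := by
  unfold Itau; rw [abs_abs, sq_abs]

lemma itau_edge {τ : ℝ} (hτ : -1 < τ) (hτ' : τ < 1) : Itau τ (1 + τ) = 0 := by
  have h1 : |(1:ℝ) + τ| = 1 + τ := abs_of_pos (by linarith)
  have hs : Real.sqrt ((1 + τ) ^ 2 - 4 * τ) = 1 - τ := by
    rw [show (1+τ)^2 - 4*τ = (1-τ)^2 by ring, Real.sqrt_sq (by linarith)]
  unfold Itau
  by_cases h : τ = 0
  · subst h; simp
  · have hne : (1:ℝ) + τ ≠ 0 := by linarith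
    rw [if_neg h, h1, hs, show ((1+τ) + (1-τ))/2 = 1 by ring, Real.log_one]
    field_simp
    ring

lemma itau_hasDerivAt {τ : ℝ} (hτ : -1 < τ) (hτ' : τ < 1) {u : ℝ} (hu : 1 + τ < u) :
    HasDerivAt (Itau τ) (u / (1 + τ) - 2 / (u + Real.sqrt (u ^ 2 - 4 * τ))) u := by
  have hu0 : 0 < u := by linarith
  have h1τ : (0:ℝ) < 1 + τ := by linarith
  have hpos : 0 < u ^ 2 - 4 * τ := by nlinarith
  set s := Real.sqrt (u ^ 2 - 4 * τ) with hs_def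
  have hs0 : 0 < s := Real.sqrt_pos.mpr hpos
  have hs2 : s ^ 2 = u ^ 2 - 4 * τ := Real.sq_sqrt hpos.le
  by_cases h0 : τ = 0
  · subst h0
    have heq : (fun x : ℝ => -Real.log x + x ^ 2 / 2 - 1 / 2) =ᶠ[nhds u] Itau 0 := by
      filter_upwards [eventually_gt_nhds hu0] with x hx
      unfold Itau
      rw [if_pos rfl, abs_of_pos hx]
    have hd : HasDerivAt (fun x : ℝ => -Real.log x + x ^ 2 / 2 - 1 / 2)
        (-u⁻¹ + u) u := by
      have := ((Real.hasDerivAt_log hu0.ne').neg.add ((hasDerivAt_pow 2 u).div_const 2)).sub_const (1/2)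
      refine this.congr_deriv ?_
      push_cast; ring
    have := hd.congr_of_eventuallyEq heq.symm
    refine this.congr_deriv ?_
    have hsu : s = u := by nlinarith
    rw [hsu]
    field_simp
    ring
  · have heq : (fun x : ℝ => x ^ 2 / (2 * (1 + τ)) - x * (x - Real.sqrt (x ^ 2 - 4 * τ)) / (4 * τ)
        - Real.log ((x + Real.sqrt (x ^ 2 - 4 * τ)) / 2)) =ᶠ[nhds u] Itau τ := by
      filter_upwards [eventually_gt_nhds hu0] with x hx
      unfold Itau
      rw [if_neg h0, abs_of_pos hx]
    have h1 : HasDerivAt (fun x : ℝ => x ^ 2 - 4 * τ) (2 * u) u := by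
      simpa using (hasDerivAt_pow 2 u).sub_const (4 * τ)
    have hsq : HasDerivAt (fun x => Real.sqrt (x ^ 2 - 4 * τ)) (1 / (2 * s) * (2 * u)) u :=
      (Real.hasDerivAt_sqrt hpos.ne').comp u h1
    have h2 : HasDerivAt (fun x : ℝ => x * (x - Real.sqrt (x ^ 2 - 4 * τ)))
        (1 * (u - s) + u * (1 - 1 / (2 * s) * (2 * u))) u :=
      (hasDerivAt_id u).mul ((hasDerivAt_id u).sub hsq)
    have h3 : HasDerivAt (fun x : ℝ => (x + Real.sqrt (x ^ 2 - 4 * τ)) / 2)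
        ((1 + 1 / (2 * s) * (2 * u)) / 2) u :=
      ((hasDerivAt_id u).add hsq).div_const 2
    have harg : (u + s) / 2 ≠ 0 := by positivity
    have h4 : HasDerivAt (fun x : ℝ => Real.log ((x + Real.sqrt (x ^ 2 - 4 * τ)) / 2))
        (((1 + 1 / (2 * s) * (2 * u)) / 2) / ((u + s) / 2)) u := h3.log harg
    have h5 := (((hasDerivAt_pow 2 u).div_const (2 * (1 + τ))).sub (h2.div_const (4 * τ))).sub h4
    have := h5.congr_of_eventuallyEq heq.symm
    have hus : 0 < u + s := by positivity
    have e1 : (1 + 1 / (2 * s) * (2 * u)) / 2 / ((u + s) / 2) = 1 / s := by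
      field_simp
      ring
    have e2 : (1 * (u - s) + u * (1 - 1 / (2 * s) * (2 * u))) / (4 * τ)
        = 2 / (u + s) - 1 / s := by
      rw [div_eq_iff (by simpa using h0 : (4:ℝ) * τ ≠ 0)]
      field_simp
      linear_combination (u - s) * hs2
    have hval : (↑(2:ℕ) * u ^ (2 - 1) / (2 * (1 + τ))
        - (1 * (u - s) + u * (1 - 1 / (2 * s) * (2 * u))) / (4 * τ)
        - (1 + 1 / (2 * s) * (2 * u)) / 2 / ((u + s) / 2))
        = u / (1 + τ) - 2 / (u + s) := by
      rw [e2, e1]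
      push_cast
      field_simp
      ring
    rw [hval] at this
    exact this

lemma itau_contOn {τ : ℝ} (hτ : -1 < τ) : ContinuousOn (Itau τ) (Set.Ici (1 + τ)) := by
  have h1τ : (0:ℝ) < 1 + τ := by linarith
  unfold Itau
  by_cases h : τ = 0
  · subst h
    simp only [if_pos rfl]
    refine ContinuousOn.sub (ContinuousOn.add ?_ (by fun_prop)) (by fun_prop)
    refine (continuous_abs.continuousOn.log ?_).neg
    intro x hx
    have : (1:ℝ) ≤ x := by simpa using hx
    simp only [abs_ne_zero]
    intro h0; rw [h0] at this; linarith
  · simp only [if_neg h]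
    have hsqrt : Continuous fun x : ℝ => Real.sqrt (x ^ 2 - 4 * τ) := by fun_prop
    refine ContinuousOn.sub (ContinuousOn.sub (by fun_prop) (by fun_prop)) ?_
    refine ContinuousOn.log (by fun_prop) ?_
    intro x hx
    have hx1 : 1 + τ ≤ x := hx
    have : (0:ℝ) < |x| + Real.sqrt (x ^ 2 - 4 * τ) := by
      have : 0 < |x| := by rw [abs_pos]; intro h0; rw [h0] at hx1; linarith
      have := Real.sqrt_nonneg (x ^ 2 - 4 * τ)
      linarith
    positivity

lemma itau_diffOn {τ : ℝ} (hτ : -1 < τ) (hτ' : τ < 1) :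
    DifferentiableOn ℝ (Itau τ) (interior (Set.Ici (1 + τ))) := by
  rw [interior_Ici]
  intro x hx
  exact (itau_hasDerivAt hτ hτ' hx).differentiableAt.differentiableWithinAt

lemma itau_deriv_facts {τ : ℝ} (hτ : -1 < τ) (hτ' : τ < 1) {u : ℝ} (hu : 1 + τ < u) :
    deriv (Itau τ) u = u / (1 + τ) - 2 / (u + Real.sqrt (u ^ 2 - 4 * τ)) :=
  (itau_hasDerivAt hτ hτ' hu).deriv

lemma itau_aux_bounds {τ : ℝ} (hτ : -1 < τ) (hτ' : τ < 1) {u : ℝ} (hu : 1 + τ < u) :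
    1 - τ ≤ Real.sqrt (u ^ 2 - 4 * τ) ∧ 0 < u := by
  have hu0 : 0 < u := by linarith
  refine ⟨?_, hu0⟩
  rw [show u ^ 2 - 4 * τ = (u^2 - 4*τ) from rfl]
  have h2 : (1 - τ)^2 ≤ u ^ 2 - 4 * τ := by nlinarith
  calc 1 - τ = Real.sqrt ((1-τ)^2) := (Real.sqrt_sq (by linarith)).symm
    _ ≤ _ := Real.sqrt_le_sqrt h2

lemma itau_deriv_nonneg {τ : ℝ} (hτ : -1 < τ) (hτ' : τ < 1) {u : ℝ} (hu : 1 + τ < u) :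
    0 ≤ deriv (Itau τ) u := by
  rw [itau_deriv_facts hτ hτ' hu]
  obtain ⟨hs1, hu0⟩ := itau_aux_bounds hτ hτ' hu
  set s := Real.sqrt (u ^ 2 - 4 * τ)
  have hus : 0 < u + s := by linarith
  have h1τ : (0:ℝ) < 1 + τ := by linarith
  rw [sub_nonneg, div_le_div_iff₀ hus h1τ]
  nlinarith

lemma itau_monoOn {τ : ℝ} (hτ : -1 < τ) (hτ' : τ < 1) :
    MonotoneOn (Itau τ) (Set.Ici (1 + τ)) := by
  refine monotoneOn_of_deriv_nonneg (convex_Ici _) (itau_contOn hτ) (itau_diffOn hτ hτ') ?_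
  rw [interior_Ici]
  intro x hx
  exact itau_deriv_nonneg hτ hτ' hx

lemma itau_convexOn {τ : ℝ} (hτ : -1 < τ) (hτ' : τ < 1) :
    ConvexOn ℝ (Set.Ici (1 + τ)) (Itau τ) := by
  refine MonotoneOn.convexOn_of_deriv (convex_Ici _) (itau_contOn hτ) (itau_diffOn hτ hτ') ?_
  rw [interior_Ici]
  intro x hx y hy hxy
  rw [itau_deriv_facts hτ hτ' hx, itau_deriv_facts hτ hτ' hy]
  obtain ⟨hsx, hx0⟩ := itau_aux_bounds hτ hτ' hx
  obtain ⟨hsy, hy0⟩ := itau_aux_bounds hτ hτ' hy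
  have h1τ : (0:ℝ) < 1 + τ := by linarith
  have hs_mono : Real.sqrt (x ^ 2 - 4 * τ) ≤ Real.sqrt (y ^ 2 - 4 * τ) := by
    apply Real.sqrt_le_sqrt; nlinarith
  have hxs : 0 < x + Real.sqrt (x ^ 2 - 4 * τ) := by linarith
  have hys : 0 < y + Real.sqrt (y ^ 2 - 4 * τ) := by linarith
  have h1 : x / (1 + τ) ≤ y / (1 + τ) := by gcongr
  have h2 : 2 / (y + Real.sqrt (y ^ 2 - 4 * τ)) ≤ 2 / (x + Real.sqrt (x ^ 2 - 4 * τ)) := by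
    apply div_le_div_of_nonneg_left (by norm_num) hxs (by linarith)
  linarith

lemma phi_key {p : ℕ} (hp : 3 ≤ p) {τ : ℝ} (hτ : -1 < τ) (hτ' : τ < 1) (u : ℝ) :
    phiTauP p τ u = u ^ 2 / (2 * ((p:ℝ) * ((p:ℝ) - 1) * (1 + τ))) - 1 / 2
      - Itau τ (max (|u| / Real.sqrt ((p:ℝ) * ((p:ℝ) - 1))) (1 + τ)) := by
  have hp3 : (3:ℝ) ≤ (p:ℝ) := by exact_mod_cast hp
  have hpp : (0:ℝ) < (p:ℝ) * ((p:ℝ) - 1) := by nlinarith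
  set c := Real.sqrt ((p:ℝ) * ((p:ℝ) - 1)) with hc_def
  have hc0 : 0 < c := Real.sqrt_pos.mpr hpp
  have hc2 : c ^ 2 = (p:ℝ) * ((p:ℝ) - 1) := Real.sq_sqrt hpp.le
  have habs : |u / c| = |u| / c := by rw [abs_div, abs_of_pos hc0]
  have h1τ : (0:ℝ) < 1 + τ := by linarith
  have hsq : (u / c) ^ 2 / (2 * (1 + τ)) = u ^ 2 / (2 * ((p:ℝ) * ((p:ℝ) - 1) * (1 + τ))) := by
    rw [div_pow, hc2, div_div]
    congr 1
    ring
  unfold phiTauP phiTau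
  rcases lt_or_ge (1 + τ) (|u / c|) with h | h
  · rw [if_pos h, hsq]
    rw [habs] at h
    rw [max_eq_left h.le, ← habs, itau_abs]
  · rw [if_neg (not_lt.mpr h), hsq]
    rw [habs] at h
    rw [max_eq_right h, itau_edge hτ hτ']

lemma phi_midpoint {p : ℕ} (hp : 3 ≤ p) {τ : ℝ} (hτ : -1 < τ) (hτ' : τ < 1) (u₁ u₂ : ℝ) :
    phiTauP p τ u₁ + phiTauP p τ u₂ - 2 * phiTauP p τ ((u₁ + u₂) / 2)
      ≤ (u₁ - u₂) ^ 2 / (4 * ((p:ℝ) * ((p:ℝ) - 1) * (1 + τ))) := by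
  have hp3 : (3:ℝ) ≤ (p:ℝ) := by exact_mod_cast hp
  have hpp : (0:ℝ) < (p:ℝ) * ((p:ℝ) - 1) := by nlinarith
  have h1τ : (0:ℝ) < 1 + τ := by linarith
  set c := Real.sqrt ((p:ℝ) * ((p:ℝ) - 1)) with hc_def
  have hc0 : 0 < c := Real.sqrt_pos.mpr hpp
  set W₁ := max (|u₁| / c) (1 + τ) with hW₁
  set W₂ := max (|u₂| / c) (1 + τ) with hW₂
  set Wm := max (|(u₁ + u₂) / 2| / c) (1 + τ) with hWm
  have hmem₁ : W₁ ∈ Set.Ici (1 + τ) := Set.mem_Ici.mpr (le_max_right _ _)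
  have hmem₂ : W₂ ∈ Set.Ici (1 + τ) := Set.mem_Ici.mpr (le_max_right _ _)
  have hmemm : Wm ∈ Set.Ici (1 + τ) := Set.mem_Ici.mpr (le_max_right _ _)
  have hwm : Wm ≤ (W₁ + W₂) / 2 := by
    have hb₁ : |u₁| / c ≤ W₁ := le_max_left _ _
    have hb₂ : |u₂| / c ≤ W₂ := le_max_left _ _
    have hc₁ : (1:ℝ) + τ ≤ W₁ := le_max_right _ _
    have hc₂ : (1:ℝ) + τ ≤ W₂ := le_max_right _ _
    apply max_le
    · have h2 : |(u₁ + u₂) / 2| = |u₁ + u₂| / 2 := by rw [abs_div]; norm_num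
      have e : (|u₁| / c + |u₂| / c) / 2 = (|u₁| + |u₂|) / (2 * c) := by
        field_simp
      have h3 : |(u₁ + u₂) / 2| / c ≤ (|u₁| / c + |u₂| / c) / 2 := by
        rw [h2, e, div_div]
        gcongr
        exact abs_add_le _ _
      refine h3.trans ?_
      linarith
    · linarith
  have havg : (W₁ + W₂) / 2 ∈ Set.Ici (1 + τ) := by
    simp only [Set.mem_Ici] at *
    linarith
  have hF : Itau τ Wm ≤ (Itau τ W₁ + Itau τ W₂) / 2 := by
    calc Itau τ Wm ≤ Itau τ ((W₁ + W₂) / 2) := itau_monoOn hτ hτ' hmemm havg hwm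
      _ ≤ (Itau τ W₁ + Itau τ W₂) / 2 := by
          have h2 := (itau_convexOn hτ hτ').2 hmem₁ hmem₂
            (by norm_num : (0:ℝ) ≤ 1/2) (by norm_num : (0:ℝ) ≤ 1/2) (by norm_num)
          simp only [smul_eq_mul] at h2
          calc Itau τ ((W₁ + W₂) / 2) = Itau τ (1/2 * W₁ + 1/2 * W₂) := by ring_nf
            _ ≤ 1/2 * Itau τ W₁ + 1/2 * Itau τ W₂ := h2
            _ = (Itau τ W₁ + Itau τ W₂) / 2 := by ring
  rw [phi_key hp hτ hτ' u₁, phi_key hp hτ hτ' u₂, phi_key hp hτ hτ' ((u₁ + u₂) / 2)]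
  rw [← hc_def, ← hW₁, ← hW₂, ← hWm]
  have hD : (0:ℝ) < (p:ℝ) * ((p:ℝ) - 1) * (1 + τ) := by positivity
  have e : u₁ ^ 2 / (2 * ((p:ℝ) * ((p:ℝ) - 1) * (1 + τ)))
      + u₂ ^ 2 / (2 * ((p:ℝ) * ((p:ℝ) - 1) * (1 + τ)))
      - 2 * (((u₁ + u₂) / 2) ^ 2 / (2 * ((p:ℝ) * ((p:ℝ) - 1) * (1 + τ))))
      = (u₁ - u₂) ^ 2 / (4 * ((p:ℝ) * ((p:ℝ) - 1) * (1 + τ))) := by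
    field_simp
    ring
  linarith [e, hF]

lemma sum_pow_ge (q : ℝ) (hq : 0 ≤ q) (n : ℕ) :
    ((n:ℝ) + 1) * q ^ n ≤ ∑ j ∈ Finset.range (n + 1), (q ^ 2) ^ j := by
  have h2 : ∑ j ∈ Finset.range (n + 1), ((q ^ 2) ^ j + (q ^ 2) ^ (n - j))
      = 2 * ∑ j ∈ Finset.range (n + 1), (q ^ 2) ^ j := by
    rw [Finset.sum_add_distrib]
    have := Finset.sum_range_reflect (fun j => (q ^ 2) ^ j) (n + 1)
    simp only [Nat.add_sub_cancel] at this
    rw [this]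
    ring
  have hterm : ∀ j ∈ Finset.range (n + 1), 2 * q ^ n ≤ (q ^ 2) ^ j + (q ^ 2) ^ (n - j) := by
    intro j hj
    have hj' : j ≤ n := Nat.lt_succ_iff.mp (Finset.mem_range.mp hj)
    have e1 : (q ^ 2) ^ j = (q ^ j) ^ 2 := by ring
    have e2 : (q ^ 2) ^ (n - j) = (q ^ (n - j)) ^ 2 := by ring
    have e3 : q ^ j * q ^ (n - j) = q ^ n := by
      rw [← pow_add]; congr 1; omega
    nlinarith [sq_nonneg (q ^ j - q ^ (n - j))]
  have := Finset.sum_le_sum hterm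
  rw [h2] at this
  simp only [Finset.sum_const, Finset.card_range, nsmul_eq_mul] at this
  push_cast at this
  linarith

lemma hS_lemma (r : ℝ) (hr : |r| ≤ 1) (m : ℕ) :
    ((m:ℝ) + 2) * |r ^ (m + 1)| * (1 - r ^ 2) ≤ 1 - (r ^ (m + 1)) ^ 2 * r ^ 2 := by
  have h0 : 0 ≤ 1 - r ^ 2 := by nlinarith [sq_abs r, abs_nonneg r]
  have h1 : (r ^ (m + 1)) ^ 2 * r ^ 2 = (r ^ 2) ^ (m + 2) := by ring
  have hgeom : (1 - r ^ 2) * ∑ j ∈ Finset.range (m + 2), (r ^ 2) ^ j = 1 - (r ^ 2) ^ (m + 2) := by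
    have := geom_sum_mul (r ^ 2) (m + 2)
    nlinarith [this]
  have habs : |r ^ (m + 1)| = |r| ^ (m + 1) := abs_pow r (m + 1)
  have hsum := sum_pow_ge |r| (abs_nonneg r) (m + 1)
  rw [sq_abs] at hsum
  push_cast at hsum
  calc ((m:ℝ) + 2) * |r ^ (m + 1)| * (1 - r ^ 2)
      = (1 - r ^ 2) * (((m:ℝ) + 1 + 1) * |r| ^ (m + 1)) := by rw [habs]; ring
    _ ≤ (1 - r ^ 2) * ∑ j ∈ Finset.range (m + 2), (r ^ 2) ^ j := by
        apply mul_le_mul_of_nonneg_left _ h0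
        exact hsum
    _ = 1 - (r ^ 2) ^ (m + 2) := hgeom
    _ = 1 - (r ^ (m + 1)) ^ 2 * r ^ 2 := by rw [h1]

lemma bern_lemma (q : ℝ) (h0 : 0 ≤ q) (h1 : q ≤ 1) (m : ℕ) :
    1 - q ^ (m + 1) ≤ ((m:ℝ) + 1) * (1 - q) := by
  have := one_add_mul_le_pow (a := q - 1) (by linarith) (m + 1)
  have e : (1 + (q - 1)) = q := by ring
  rw [e] at this
  push_cast at this
  nlinarith [this]

lemma Npos (m : ℕ) (τ a r : ℝ) (hτlow : -(1/((m:ℝ)+2)) < τ) (hτ' : τ < 1)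
    (ha0 : 0 < a) (ha1 : a ≤ 1)
    (hS' : ((m:ℝ)+2)*a*(1-r^2) ≤ 1 - a^2*r^2)
    (hKey : (1-a)*r^2 ≤ ((m:ℝ)+1)*(1-r^2)) :
    0 ≤ ((m:ℝ)+1)*(1 - a^2*r^2 + ((m:ℝ)+2)*τ*a*(1-r^2))
      - ((m:ℝ)+2)*(1+τ)*a*(1-a)*r^2 := by
  have hm2 : (0:ℝ) < (m:ℝ)+2 := by positivity
  set A₁ := ((m:ℝ)+2)*a*(((m:ℝ)+1)*(1-r^2) - (1-a)*r^2) with hA₁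
  set A₀ := ((m:ℝ)+1)*(1 - a^2*r^2) - ((m:ℝ)+2)*a*(1-a)*r^2 with hA₀
  have hexpand : ((m:ℝ)+1)*(1 - a^2*r^2 + ((m:ℝ)+2)*τ*a*(1-r^2))
      - ((m:ℝ)+2)*(1+τ)*a*(1-a)*r^2 = A₀ + τ*A₁ := by
    rw [hA₀, hA₁]; ring
  rw [hexpand]
  rcases le_or_gt 0 A₁ with h | h
  · have h1 : -(1/((m:ℝ)+2)) * A₁ ≤ τ * A₁ := mul_le_mul_of_nonneg_right hτlow.le h
    have e : A₀ - (1/((m:ℝ)+2))*A₁ = ((m:ℝ)+1)*(1-a) := by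
      rw [hA₀, hA₁]
      field_simp
      ring
    have h2 : (0:ℝ) ≤ ((m:ℝ)+1)*(1-a) := by
      apply mul_nonneg (by positivity)
      linarith
    nlinarith [h1, e, h2]
  · have h1 : A₁ ≤ τ * A₁ := by nlinarith
    have h2 : (0:ℝ) ≤ A₀ + A₁ := by
      have hs1 : ((m:ℝ)+1)*(((m:ℝ)+2)*a*(1-r^2)) ≤ ((m:ℝ)+1)*(1 - a^2*r^2) :=
        mul_le_mul_of_nonneg_left hS' (by positivity)
      have hs2 : (2*((m:ℝ)+2)*a)*((1-a)*r^2) ≤ (2*((m:ℝ)+2)*a)*(((m:ℝ)+1)*(1-r^2)) :=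
        mul_le_mul_of_nonneg_left hKey (by positivity)
      rw [hA₀, hA₁]
      nlinarith [hs1, hs2]
    linarith

set_option maxHeartbeats 1000000 in
lemma algebra_key (p : ℕ) (hp : 3 ≤ p) (τ : ℝ) (hτ : -(1 / ((p : ℝ) - 1)) < τ) (hτ' : τ < 1)
    {r : ℝ} (hr : -1 < r) (hr' : r < 1) :
    0 < bFun p τ r ∧
      (1 + ((p:ℝ) - 1) * τ) * bFun p τ r
        ≤ ((p:ℝ) - 1) * (1 + τ) * (k1Fun p τ r - k2Fun p τ r) := by
  obtain ⟨m, rfl⟩ : ∃ m, p = m + 3 := ⟨p - 3, by omega⟩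
  have hm2 : (0:ℝ) < (m:ℝ) + 2 := by positivity
  have hcast : ((m + 3 : ℕ) : ℝ) - 1 = (m:ℝ) + 2 := by push_cast; ring
  have hτlow : -(1 / ((m:ℝ) + 2)) < τ := by rwa [hcast] at hτ
  have hτm1 : -1 < τ := by
    have h1 : 1 / ((m:ℝ) + 2) ≤ 1 := by
      rw [div_le_one hm2]; linarith
    linarith
  have hrabs : |r| < 1 := abs_lt.mpr ⟨hr, hr'⟩
  obtain ⟨t, ht_def⟩ : ∃ t : ℝ, r ^ (m + 1) = t := ⟨_, rfl⟩
  have ht_abs : |t| = |r| ^ (m + 1) := by rw [← ht_def]; exact abs_pow r (m + 1)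
  have ht1 : |t| ≤ 1 := by
    rw [ht_abs]; exact pow_le_one₀ (abs_nonneg r) hrabs.le
  have h1r2 : 0 ≤ 1 - r ^ 2 := by nlinarith [sq_abs r, abs_nonneg r]
  have h1tr2 : 0 < 1 - t ^ 2 * r ^ 2 := by
    have h1 : t ^ 2 * r ^ 2 = (|t| * |r|) ^ 2 := by
      rw [mul_pow, sq_abs, sq_abs]
    have h2 : |t| * |r| < 1 := by
      calc |t| * |r| ≤ 1 * |r| := mul_le_mul_of_nonneg_right ht1 (abs_nonneg r)
        _ = |r| := one_mul _
        _ < 1 := hrabs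
    rw [h1]
    nlinarith [mul_nonneg (abs_nonneg t) (abs_nonneg r)]
  have hS : ((m:ℝ) + 2) * |t| * (1 - r ^ 2) ≤ 1 - t ^ 2 * r ^ 2 := by
    have := hS_lemma r hrabs.le m
    rwa [ht_def] at this
  have hτabs : |τ| < 1 := abs_lt.mpr ⟨hτm1, hτ'⟩
  -- power rewrites
  have e1 : r ^ (2 * (m + 3) - 2) = t ^ 2 * r ^ 2 := by
    rw [show 2 * (m + 3) - 2 = (m + 1) * 2 + 2 by omega, pow_add, pow_mul, ht_def]
  have e2 : r ^ (2 * ((m + 3) - 2)) = t ^ 2 := by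
    rw [show 2 * ((m + 3) - 2) = (m + 1) * 2 by omega, pow_mul, ht_def]
  have e3 : r ^ (m + 3) = t * r ^ 2 := by
    rw [show m + 3 = (m + 1) + 2 by omega, pow_add, ht_def]
  have e4 : r ^ (3 * (m + 3) - 4) = t ^ 3 * r ^ 2 := by
    rw [show 3 * (m + 3) - 4 = (m + 1) * 3 + 2 by omega, pow_add, pow_mul, ht_def]
  -- the P/M factorization
  have hbPM : bFun (m + 3) τ r
      = (1 - t ^ 2 * r ^ 2 + ((m:ℝ) + 2) * τ * t * (1 - r ^ 2))
        * (1 - t ^ 2 * r ^ 2 - ((m:ℝ) + 2) * τ * t * (1 - r ^ 2)) := by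
    unfold bFun
    rw [e1, e2, hcast]
    ring
  have hkey : |((m:ℝ) + 2) * τ * t * (1 - r ^ 2)| ≤ |τ| * (1 - t ^ 2 * r ^ 2) := by
    have h1 : |((m:ℝ) + 2) * τ * t * (1 - r ^ 2)|
        = |τ| * (((m:ℝ) + 2) * |t| * (1 - r ^ 2)) := by
      rw [abs_mul, abs_mul, abs_mul, abs_of_nonneg hm2.le, abs_of_nonneg h1r2]
      ring
    rw [h1]
    exact mul_le_mul_of_nonneg_left hS (abs_nonneg τ)
  have hP : 0 < 1 - t ^ 2 * r ^ 2 + ((m:ℝ) + 2) * τ * t * (1 - r ^ 2) := by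
    nlinarith [neg_abs_le (((m:ℝ) + 2) * τ * t * (1 - r ^ 2)), hkey, h1tr2, hτabs,
      abs_nonneg τ]
  have hM : 0 < 1 - t ^ 2 * r ^ 2 - ((m:ℝ) + 2) * τ * t * (1 - r ^ 2) := by
    nlinarith [le_abs_self (((m:ℝ) + 2) * τ * t * (1 - r ^ 2)), hkey, h1tr2, hτabs,
      abs_nonneg τ]
  -- N nonneg
  have hN : 0 ≤ ((m:ℝ) + 1) * (1 - t ^ 2 * r ^ 2 - ((m:ℝ) + 2) * τ * t * (1 - r ^ 2))
      + ((m:ℝ) + 2) * (1 + τ) * t * (t + 1) * r ^ 2 := by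
    rcases le_or_gt 0 t with ht0 | ht0
    · have htp1 : (0:ℝ) ≤ t + 1 := by nlinarith [neg_abs_le t, ht1]
      have h2 : 0 ≤ ((m:ℝ) + 2) * (1 + τ) * t * (t + 1) * r ^ 2 := by
        apply mul_nonneg
        apply mul_nonneg
        apply mul_nonneg
        apply mul_nonneg hm2.le (by linarith)
        exact ht0
        exact htp1
        exact sq_nonneg r
      nlinarith [hM, h2]
    · have habs' : |t| = -t := abs_of_neg ht0
      rw [habs'] at hS ht1
      have ha0 : 0 < -t := by linarith
      have hS' : ((m:ℝ) + 2) * (-t) * (1 - r ^ 2) ≤ 1 - (-t) ^ 2 * r ^ 2 := by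
        nlinarith [hS]
      have haval : -t = |r| ^ (m + 1) := by rw [← habs', ht_abs]
      have hBern := bern_lemma |r| (abs_nonneg r) hrabs.le m
      rw [← haval] at hBern
      have hKey : (1 - (-t)) * r ^ 2 ≤ ((m:ℝ) + 1) * (1 - r ^ 2) := by
        have h₁ : (1 - (-t)) * r ^ 2 ≤ (((m:ℝ) + 1) * (1 - |r|)) * r ^ 2 :=
          mul_le_mul_of_nonneg_right hBern (sq_nonneg r)
        have h₂ : (1 - |r|) * r ^ 2 ≤ (1 - |r|) * (1 + |r|) := by
          apply mul_le_mul_of_nonneg_left _ (by linarith [hrabs.le])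
          nlinarith [sq_abs r, abs_nonneg r]
        have h₃ : (1 - |r|) * (1 + |r|) = 1 - r ^ 2 := by
          nlinarith [sq_abs r]
        nlinarith [h₁, h₂, h₃]
      have := Npos m τ (-t) r hτlow hτ' ha0 ht1 hS' hKey
      nlinarith [this]
  constructor
  · rw [hbPM]; exact mul_pos hP hM
  · have hGPN : (((m + 3 : ℕ) : ℝ) - 1) * (1 + τ) * (k1Fun (m + 3) τ r - k2Fun (m + 3) τ r)
        - (1 + (((m + 3 : ℕ) : ℝ) - 1) * τ) * bFun (m + 3) τ r
        = (1 - t ^ 2 * r ^ 2 + ((m:ℝ) + 2) * τ * t * (1 - r ^ 2))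
          * (((m:ℝ) + 1) * (1 - t ^ 2 * r ^ 2 - ((m:ℝ) + 2) * τ * t * (1 - r ^ 2))
            + ((m:ℝ) + 2) * (1 + τ) * t * (t + 1) * r ^ 2) := by
      unfold k1Fun k2Fun bFun
      rw [e1, e2, e3, e4, hcast]
      ring
    have h0 := mul_nonneg hP.le hN
    rw [← hGPN] at h0
    linarith

lemma sigmaTwo_midpoint (p : ℕ) (hp : 3 ≤ p) (τ : ℝ) (hτ : -(1 / ((p : ℝ) - 1)) < τ)
    (hτ' : τ < 1) {r : ℝ} (hr : -1 < r) (hr' : r < 1) (u₁ u₂ : ℝ) :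
    SigmaTwo p τ r u₁ u₂ ≤ SigmaTwo p τ r ((u₁ + u₂) / 2) ((u₁ + u₂) / 2) := by
  have hp3 : (3:ℝ) ≤ (p:ℝ) := by exact_mod_cast hp
  have hp1 : (0:ℝ) < (p:ℝ) - 1 := by linarith
  have hτm1 : -1 < τ := by
    have h1 : 1 / ((p:ℝ) - 1) ≤ 1 := by rw [div_le_one hp1]; linarith
    linarith
  have h1τ : (0:ℝ) < 1 + τ := by linarith
  obtain ⟨hb, hG⟩ := algebra_key p hp τ hτ hτ' hr hr'
  have hα : 0 < 1 + ((p:ℝ) - 1) * τ := by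
    have h2 := mul_lt_mul_of_pos_right hτ hp1
    have h3 : (1 / ((p:ℝ) - 1)) * ((p:ℝ) - 1) = 1 := one_div_mul_cancel hp1.ne'
    nlinarith [h2, h3]
  have hp0 : (0:ℝ) < (p:ℝ) := by linarith
  have hden : 0 < 2 * (p:ℝ) * (1 + ((p:ℝ) - 1) * τ) * bFun p τ r := by
    apply mul_pos (mul_pos (by linarith) hα) hb
  have hDφ : (0:ℝ) < 4 * ((p:ℝ) * ((p:ℝ) - 1) * (1 + τ)) := by positivity
  have hmid := phi_midpoint hp hτm1 hτ' u₁ u₂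
  have key : (u₁ - u₂) ^ 2 / (4 * ((p:ℝ) * ((p:ℝ) - 1) * (1 + τ)))
      ≤ (k1Fun p τ r * u₁ ^ 2 + 2 * k2Fun p τ r * u₁ * u₂ + k1Fun p τ r * u₂ ^ 2) /
          (2 * (p:ℝ) * (1 + ((p:ℝ) - 1) * τ) * bFun p τ r)
        - (k1Fun p τ r * ((u₁ + u₂) / 2) ^ 2
            + 2 * k2Fun p τ r * ((u₁ + u₂) / 2) * ((u₁ + u₂) / 2)
            + k1Fun p τ r * ((u₁ + u₂) / 2) ^ 2) /
          (2 * (p:ℝ) * (1 + ((p:ℝ) - 1) * τ) * bFun p τ r) := by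
    rw [div_sub_div_same, div_le_div_iff₀ hDφ hden]
    have hprod := mul_le_mul_of_nonneg_left hG
      (show (0:ℝ) ≤ 2 * (p:ℝ) * (u₁ - u₂) ^ 2 by positivity)
    nlinarith [hprod]
  unfold SigmaTwo
  push_cast
  push_cast at key
  linarith [hmid, key]

/-- Lemma 6.1 of the paper: if `B` is a connected open subset of one of
`(-∞,-E_∞)`, `(-E_∞,E_∞)`, `(E_∞,∞)`, then for every `r ∈ (-1,1)`,
`sup_{u₁,u₂ ∈ B} Σ₂^{p,τ}(r,u₁,u₂) ≤ sup_{u ∈ B} Σ₂^{p,τ}(r,u,u)`. -/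
theorem statement7
    (p : ℕ) (hp : 3 ≤ p) (τ : ℝ) (hτ : -(1 / ((p : ℝ) - 1)) < τ) (hτ' : τ < 1)
    (B : Set ℝ) (hBopen : IsOpen B) (hBconn : IsPreconnected B)
    (hB : B ⊆ Set.Iio (-Einf p τ) ∨ B ⊆ Set.Ioo (-Einf p τ) (Einf p τ) ∨
      B ⊆ Set.Ioi (Einf p τ)) :
    ∀ r ∈ Set.Ioo (-1 : ℝ) 1,
      sSup {y : ℝ | ∃ u₁ ∈ B, ∃ u₂ ∈ B, y = SigmaTwo p τ r u₁ u₂} ≤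
        sSup {y : ℝ | ∃ u ∈ B, y = SigmaTwo p τ r u u} := by
  intro r hr
  obtain ⟨hr1, hr2⟩ := hr
  rcases Set.eq_empty_or_nonempty B with hBe | ⟨u₀, hu₀⟩
  · subst hBe
    simp
  · have hsub : {y : ℝ | ∃ u ∈ B, y = SigmaTwo p τ r u u}
        ⊆ {y : ℝ | ∃ u₁ ∈ B, ∃ u₂ ∈ B, y = SigmaTwo p τ r u₁ u₂} := by
      rintro y ⟨u, hu, rfl⟩
      exact ⟨u, hu, u, hu, rfl⟩
    have hOC : B.OrdConnected := hBconn.ordConnected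
    have hmid : ∀ y ∈ {y : ℝ | ∃ u₁ ∈ B, ∃ u₂ ∈ B, y = SigmaTwo p τ r u₁ u₂},
        ∃ z ∈ {y : ℝ | ∃ u ∈ B, y = SigmaTwo p τ r u u}, y ≤ z := by
      rintro y ⟨u₁, h₁, u₂, h₂, rfl⟩
      have hmB : (u₁ + u₂) / 2 ∈ B := by
        rcases le_total u₁ u₂ with h | h
        · exact hOC.out h₁ h₂ ⟨by linarith, by linarith⟩
        · exact hOC.out h₂ h₁ ⟨by linarith, by linarith⟩
      exact ⟨SigmaTwo p τ r ((u₁ + u₂) / 2) ((u₁ + u₂) / 2), ⟨_, hmB, rfl⟩,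
        sigmaTwo_midpoint p hp τ hτ hτ' hr1 hr2 u₁ u₂⟩
    by_cases hbdd : BddAbove {y : ℝ | ∃ u ∈ B, y = SigmaTwo p τ r u u}
    · refine csSup_le ⟨SigmaTwo p τ r u₀ u₀, u₀, hu₀, u₀, hu₀, rfl⟩ ?_
      intro y hy
      obtain ⟨z, hz, hyz⟩ := hmid y hy
      exact hyz.trans (le_csSup hbdd hz)
    · have hbdd2 : ¬ BddAbove {y : ℝ | ∃ u₁ ∈ B, ∃ u₂ ∈ B, y = SigmaTwo p τ r u₁ u₂} :=
        fun h => hbdd (h.mono hsub)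
      rw [Real.sSup_of_not_bddAbove hbdd, Real.sSup_of_not_bddAbove hbdd2]

end
end

section
/- Let n ≥ 2 and let M be an n×n real matrix written in blocks as M = [[H, W],[Vᵀ, S]], where H is (n−1)×(n−1), W and V are column vectors in ℝ^{n−1}, and S ∈ ℝ. Then for every ε > 0, |det M| ≤ ε^{−1}·√(‖W‖² + S²)·(‖V‖ + ε)·∏_{i=1}^{n−1} max(s_i(H), ε). If moreover M is invertible, then |det M| ≥ |det H|·|S|·(1 + ‖V‖/s_n(M))^{−1}. -/
open MeasureTheory ProbabilityTheory Filter

noncomputable section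

/-- Ascending rearrangement of the singular values of a square real matrix. -/
def svalAsc {n : ℕ} (A : Matrix (Fin n) (Fin n) ℝ) : Fin n → ℝ := fun i =>
  Real.sqrt ((Matrix.isHermitian_conjTranspose_mul_self A).eigenvalues
    (Tuple.sort (Matrix.isHermitian_conjTranspose_mul_self A).eigenvalues i))

/-- `sval A i` is the `i`-th largest singular value of `A` (so `sval A 0 = s₁(A)` and
`sval A (n-1) = s_n(A)`). -/
def sval {n : ℕ} (A : Matrix (Fin n) (Fin n) ℝ) (i : Fin n) : ℝ := svalAsc A i.rev

/-- The largest singular value `s₁(A)` (the operator norm). -/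
def smax {n : ℕ} (A : Matrix (Fin n) (Fin n) ℝ) : ℝ := ⨆ i, sval A i

/-- The smallest singular value `s_n(A)`. -/
def smin {n : ℕ} (A : Matrix (Fin n) (Fin n) ℝ) : ℝ := ⨅ i, sval A i

/-! ### Auxiliary lemmas -/

section Aux

open Matrix Finset

lemma det_diag_vmv_of_ne {k : ℕ} (d w : Fin k → ℝ) (hd : ∀ i, d i ≠ 0) :
    (Matrix.diagonal d + Matrix.vecMulVec w w).det
      = (∏ i, d i) + ∑ i, w i ^ 2 * ∏ j ∈ Finset.univ.erase i, d j := by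
  have hdet : IsUnit (Matrix.diagonal d).det := by
    simp only [Matrix.det_diagonal, isUnit_iff_ne_zero, Finset.prod_ne_zero_iff]
    exact fun i _ => hd i
  rw [Matrix.vecMulVec_eq Unit, Matrix.det_add_replicateCol_mul_replicateRow hdet, Matrix.det_diagonal,
    Matrix.det_unique]
  have hinv : (Matrix.diagonal d)⁻¹ = Matrix.diagonal (fun i => (d i)⁻¹) := by
    apply Matrix.inv_eq_right_inv
    rw [Matrix.diagonal_mul_diagonal]
    convert Matrix.diagonal_one with i
    exact mul_inv_cancel₀ (hd i)
  have hentry : ((1 + Matrix.replicateRow Unit w * (Matrix.diagonal d)⁻¹ * Matrix.replicateCol Unit w :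
      Matrix Unit Unit ℝ)) default default = 1 + ∑ i, w i ^ 2 * (d i)⁻¹ := by
    simp [hinv, Matrix.mul_apply, Matrix.diagonal_apply, Finset.mul_sum,
      sq, mul_comm, mul_assoc, mul_left_comm, Ring.inverse_eq_inv]
  rw [hentry, mul_add, mul_one, Finset.mul_sum]
  congr 1
  refine Finset.sum_congr rfl fun i _ => ?_
  have h2 := Finset.mul_prod_erase Finset.univ d (Finset.mem_univ i)
  field_simp [hd i]
  rw [← h2]
  ring

lemma det_diag_vmv {k : ℕ} (d w : Fin k → ℝ) :
    (Matrix.diagonal d + Matrix.vecMulVec w w).det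
      = (∏ i, d i) + ∑ i, w i ^ 2 * ∏ j ∈ Finset.univ.erase i, d j := by
  have hdense : Dense ((Set.range fun i => - d i))ᶜ :=
    ((Set.finite_range _).countable).dense_compl ℝ
  have hcont1 : Continuous fun t : ℝ =>
      (Matrix.diagonal (fun i => d i + t) + Matrix.vecMulVec w w).det := by
    apply Continuous.matrix_det
    apply continuous_matrix
    intro i j
    by_cases h : i = j
    · subst h
      simp only [Matrix.diagonal_apply_eq, Matrix.vecMulVec_apply, Matrix.add_apply]
      exact (continuous_const.add continuous_id).add continuous_const
    · simpa [Matrix.diagonal_apply_ne _ h, Matrix.vecMulVec_apply] using continuous_const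
  have hcont2 : Continuous fun t : ℝ =>
      (∏ i, (d i + t)) + ∑ i, w i ^ 2 * ∏ j ∈ Finset.univ.erase i, (d j + t) := by
    apply Continuous.add
    · exact continuous_finset_prod _ fun i _ => continuous_const.add continuous_id
    · exact continuous_finset_sum _ fun i _ => continuous_const.mul
        (continuous_finset_prod _ fun j _ => continuous_const.add continuous_id)
  have heq := Continuous.ext_on hdense hcont1 hcont2 ?_
  · have h0 := congrFun heq 0
    simpa using h0
  · intro t ht
    apply det_diag_vmv_of_ne
    intro i
    intro hzero
    exact ht ⟨i, by dsimp only; linarith⟩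

lemma sq_max_sqrt {a ε : ℝ} (ha : 0 ≤ a) (hε : 0 ≤ ε) :
    max (Real.sqrt a) ε ^ 2 = max a (ε ^ 2) := by
  rcases le_total (Real.sqrt a) ε with h | h
  · rw [max_eq_right h, max_eq_right]
    nlinarith [Real.sq_sqrt ha, Real.sqrt_nonneg a]
  · rw [max_eq_left h, max_eq_left, Real.sq_sqrt ha]
    nlinarith [Real.sq_sqrt ha, Real.sqrt_nonneg a]

lemma gram_vmv_det_eq {k : ℕ} (Hm : Matrix (Fin k) (Fin k) ℝ) (v : Fin k → ℝ) :
    ∃ w : Fin k → ℝ, (∑ i, w i ^ 2) = (∑ i, v i ^ 2) ∧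
      (Hmᴴ * Hm + Matrix.vecMulVec v v).det =
        (Matrix.diagonal ((Matrix.isHermitian_conjTranspose_mul_self Hm).eigenvalues) +
          Matrix.vecMulVec w w).det := by
  set hG := Matrix.isHermitian_conjTranspose_mul_self Hm with hGdef
  set U : Matrix (Fin k) (Fin k) ℝ := (hG.eigenvectorUnitary : Matrix (Fin k) (Fin k) ℝ) with hU
  have hstar : star U = Uᵀ := by
    rw [Matrix.star_eq_conjTranspose, Matrix.conjTranspose_eq_transpose_of_trivial]
  have hUUt : U * Uᵀ = 1 := by
    rw [← hstar]; exact (Matrix.mem_unitaryGroup_iff).mp (hG.eigenvectorUnitary).2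
  have hUtU : Uᵀ * U = 1 := by
    rw [← hstar]; exact (Matrix.mem_unitaryGroup_iff').mp (hG.eigenvectorUnitary).2
  refine ⟨Uᵀ *ᵥ v, ?_, ?_⟩
  · have h1 : (Uᵀ *ᵥ v) ⬝ᵥ (Uᵀ *ᵥ v) = v ⬝ᵥ v := by
      rw [Matrix.dotProduct_mulVec, Matrix.mulVec_transpose, Matrix.vecMul_vecMul, hUUt,
        Matrix.vecMul_one]
    simpa [dotProduct, sq] using h1
  · have hspec : Hmᴴ * Hm = U * Matrix.diagonal hG.eigenvalues * Uᵀ := by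
      have := hG.spectral_theorem
      rw [Unitary.conjStarAlgAut_apply, ← hU, hstar] at this
      simpa [RCLike.ofReal_real_eq_id] using this
    have hvmv : Matrix.vecMulVec v v =
        U * Matrix.vecMulVec (Uᵀ *ᵥ v) (Uᵀ *ᵥ v) * Uᵀ := by
      simp only [Matrix.vecMulVec_eq Unit]
      rw [Matrix.replicateCol_mulVec, Matrix.mulVec_transpose, Matrix.replicateRow_vecMul]
      calc Matrix.replicateCol Unit v * Matrix.replicateRow Unit v
          = (U * Uᵀ) * Matrix.replicateCol Unit v * (Matrix.replicateRow Unit v * (U * Uᵀ)) := by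
            rw [hUUt]; simp [Matrix.one_mul, Matrix.mul_one]
        _ = U * (Uᵀ * Matrix.replicateCol Unit v * (Matrix.replicateRow Unit v * U)) * Uᵀ := by
            simp only [Matrix.mul_assoc]
    have hdetU : U.det * U.det = 1 := by
      have := congrArg Matrix.det hUUt
      rwa [Matrix.det_mul, Matrix.det_transpose, Matrix.det_one] at this
    conv_lhs => rw [hspec, hvmv]
    rw [show U * Matrix.diagonal hG.eigenvalues * Uᵀ +
          U * Matrix.vecMulVec (Uᵀ *ᵥ v) (Uᵀ *ᵥ v) * Uᵀ =
        U * (Matrix.diagonal hG.eigenvalues + Matrix.vecMulVec (Uᵀ *ᵥ v) (Uᵀ *ᵥ v)) * Uᵀ by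
      rw [Matrix.mul_add, Matrix.add_mul]]
    rw [Matrix.det_mul, Matrix.det_mul, Matrix.det_transpose]
    linear_combination (Matrix.diagonal hG.eigenvalues +
      Matrix.vecMulVec (Uᵀ *ᵥ v) (Uᵀ *ᵥ v)).det * hdetU

lemma diag_vmv_le {k : ℕ} (μ w : Fin k → ℝ) (hμ : ∀ i, 0 ≤ μ i) {ε : ℝ} (hε : 0 < ε) :
    (Matrix.diagonal μ + Matrix.vecMulVec w w).det ≤
      (∏ i, max (μ i) (ε ^ 2)) * (1 + (∑ i, w i ^ 2) / ε ^ 2) := by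
  have hformula := det_diag_vmv μ w
  have hmaxpos : ∀ i, (0:ℝ) < max (μ i) (ε ^ 2) := fun i =>
    lt_max_of_lt_right (by positivity)
  have h1 : (∏ i, μ i) ≤ ∏ i, max (μ i) (ε ^ 2) :=
    Finset.prod_le_prod (fun i _ => hμ i) (fun i _ => le_max_left _ _)
  have h2 : ∀ i : Fin k, (∏ j ∈ Finset.univ.erase i, μ j) ≤
      (∏ j, max (μ j) (ε ^ 2)) / ε ^ 2 := by
    intro i
    have he : (∏ j ∈ Finset.univ.erase i, μ j) ≤ ∏ j ∈ Finset.univ.erase i, max (μ j) (ε ^ 2) :=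
      Finset.prod_le_prod (fun j _ => hμ j) (fun j _ => le_max_left _ _)
    have hsplit := Finset.mul_prod_erase Finset.univ (fun j => max (μ j) (ε ^ 2))
      (Finset.mem_univ i)
    have hprod_erase_nonneg : (0:ℝ) ≤ ∏ j ∈ Finset.univ.erase i, max (μ j) (ε ^ 2) :=
      Finset.prod_nonneg fun j _ => (hmaxpos j).le
    rw [le_div_iff₀ (by positivity)]
    calc (∏ j ∈ Finset.univ.erase i, μ j) * ε ^ 2
        ≤ (∏ j ∈ Finset.univ.erase i, max (μ j) (ε ^ 2)) * max (μ i) (ε ^ 2) := by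
          apply mul_le_mul he (le_max_right _ _) (by positivity) hprod_erase_nonneg
      _ = ∏ j, max (μ j) (ε ^ 2) := by rw [← hsplit]; ring
  rw [hformula, mul_add, mul_one]
  apply add_le_add h1
  have hre : (∏ i, max (μ i) (ε ^ 2)) * ((∑ i, w i ^ 2) / ε ^ 2)
      = ∑ i, w i ^ 2 * ((∏ j, max (μ j) (ε ^ 2)) / ε ^ 2) := by
    rw [Finset.sum_div, Finset.mul_sum]
    exact Finset.sum_congr rfl fun i _ => by ring
  rw [hre]
  apply Finset.sum_le_sum
  intro i _
  exact mul_le_mul_of_nonneg_left (h2 i) (by positivity)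

lemma eig_nonneg {k : ℕ} (Hm : Matrix (Fin k) (Fin k) ℝ) (i : Fin k) :
    0 ≤ (Matrix.isHermitian_conjTranspose_mul_self Hm).eigenvalues i :=
  (Matrix.posSemidef_conjTranspose_mul_self Hm).eigenvalues_nonneg i

lemma prod_max_sval_sq {k : ℕ} (Hm : Matrix (Fin k) (Fin k) ℝ) {ε : ℝ} (hε : 0 < ε) :
    (∏ i, max (sval Hm i) ε) ^ 2 =
      ∏ i, max ((Matrix.isHermitian_conjTranspose_mul_self Hm).eigenvalues i) (ε ^ 2) := by
  have h1 : (∏ i, max (sval Hm i) ε) = ∏ i, max (svalAsc Hm i) ε :=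
    Equiv.prod_comp Fin.revPerm (fun i => max (svalAsc Hm i) ε)
  have h2 : (∏ i, max (svalAsc Hm i) ε) = ∏ i,
      max (Real.sqrt ((Matrix.isHermitian_conjTranspose_mul_self Hm).eigenvalues i)) ε :=
    Equiv.prod_comp (Tuple.sort (Matrix.isHermitian_conjTranspose_mul_self Hm).eigenvalues)
      (fun i => max (Real.sqrt ((Matrix.isHermitian_conjTranspose_mul_self Hm).eigenvalues i)) ε)
  rw [h1, h2, ← Finset.prod_pow]
  exact Finset.prod_congr rfl fun i _ => sq_max_sqrt (eig_nonneg Hm i) hε.le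

lemma key1 {k : ℕ} (Hm : Matrix (Fin k) (Fin k) ℝ) (v : Fin k → ℝ) {ε : ℝ} (hε : 0 < ε) :
    (Hmᴴ * Hm + Matrix.vecMulVec v v).det ≤
      (∏ i, max (sval Hm i) ε) ^ 2 * (1 + (∑ i, v i ^ 2) / ε ^ 2) := by
  obtain ⟨w, hw, heq⟩ := gram_vmv_det_eq Hm v
  rw [heq, prod_max_sval_sq Hm hε, ← hw]
  exact diag_vmv_le _ _ (eig_nonneg Hm) hε

lemma sval_nonneg {n : ℕ} (A : Matrix (Fin n) (Fin n) ℝ) (i : Fin n) : 0 ≤ sval A i :=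
  Real.sqrt_nonneg _

lemma smin_eq {n : ℕ} (A : Matrix (Fin (n+1)) (Fin (n+1)) ℝ) :
    ∃ i, smin A = sval A i ∧ ∀ j, smin A ≤ sval A j := by
  obtain ⟨i₀, hi₀⟩ := Finite.exists_min (sval A)
  have hle : ∀ j, smin A ≤ sval A j := fun j =>
    ciInf_le (Set.Finite.bddBelow (Set.finite_range _)) j
  refine ⟨i₀, le_antisymm (hle i₀) (le_ciInf hi₀), hle⟩

lemma smin_nonneg {n : ℕ} (A : Matrix (Fin (n+1)) (Fin (n+1)) ℝ) : 0 ≤ smin A := by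
  obtain ⟨i, hi, -⟩ := smin_eq A
  rw [hi]; exact sval_nonneg A i

lemma smin_sq_le_eig {n : ℕ} (A : Matrix (Fin (n+1)) (Fin (n+1)) ℝ) (i : Fin (n+1)) :
    smin A ^ 2 ≤ (Matrix.isHermitian_conjTranspose_mul_self A).eigenvalues i := by
  set μ := (Matrix.isHermitian_conjTranspose_mul_self A).eigenvalues with hμ
  set σ := Tuple.sort μ with hσ
  obtain ⟨_, _, hle⟩ := smin_eq A
  have h1 : sval A ((σ.symm i).rev) = Real.sqrt (μ i) := by
    rw [sval, svalAsc, Fin.rev_rev, ← hσ, ← hμ, Equiv.apply_symm_apply]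
  have h2 : smin A ≤ Real.sqrt (μ i) := h1 ▸ hle _
  have h3 := Real.sq_sqrt (eig_nonneg A i)
  nlinarith [smin_nonneg A, Real.sqrt_nonneg (μ i)]

lemma rayleigh {n : ℕ} (M : Matrix (Fin (n+1)) (Fin (n+1)) ℝ) (x : Fin (n+1) → ℝ) :
    smin M ^ 2 * (x ⬝ᵥ x) ≤ (M *ᵥ x) ⬝ᵥ (M *ᵥ x) := by
  set hP := Matrix.isHermitian_conjTranspose_mul_self M with hPdef
  set μ := hP.eigenvalues with hμ
  set U : Matrix (Fin (n+1)) (Fin (n+1)) ℝ :=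
    (hP.eigenvectorUnitary : Matrix (Fin (n+1)) (Fin (n+1)) ℝ) with hU
  have hstar : star U = Uᵀ := by
    rw [Matrix.star_eq_conjTranspose, Matrix.conjTranspose_eq_transpose_of_trivial]
  have hUUt : U * Uᵀ = 1 := by
    rw [← hstar]; exact (Matrix.mem_unitaryGroup_iff).mp (hP.eigenvectorUnitary).2
  have hspec : Mᴴ * M = U * Matrix.diagonal μ * Uᵀ := by
    have := hP.spectral_theorem
    rw [Unitary.conjStarAlgAut_apply, ← hU, hstar] at this
    simpa [RCLike.ofReal_real_eq_id] using this
  have h0 : (M *ᵥ x) ⬝ᵥ (M *ᵥ x) = x ⬝ᵥ ((Mᴴ * M) *ᵥ x) := by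
    rw [← Matrix.mulVec_mulVec, Matrix.dotProduct_mulVec x,
      Matrix.conjTranspose_eq_transpose_of_trivial, ← Matrix.mulVec_transpose,
      Matrix.transpose_transpose]
  set y := Uᵀ *ᵥ x with hy
  have h1 : x ⬝ᵥ ((Mᴴ * M) *ᵥ x) = y ⬝ᵥ (Matrix.diagonal μ *ᵥ y) := by
    rw [hspec, ← Matrix.mulVec_mulVec, ← Matrix.mulVec_mulVec,
      Matrix.dotProduct_mulVec x, hy, Matrix.mulVec_transpose]
  have h2 : y ⬝ᵥ y = x ⬝ᵥ x := by
    rw [hy, Matrix.dotProduct_mulVec, Matrix.mulVec_transpose, Matrix.vecMul_vecMul,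
      hUUt, Matrix.vecMul_one]
  rw [h0, h1, ← h2]
  simp only [dotProduct, Matrix.mulVec_diagonal, Finset.mul_sum]
  apply Finset.sum_le_sum
  intro i _
  have := smin_sq_le_eig M i
  nlinarith [sq_nonneg (y i)]

lemma inv_corner {m : ℕ} (M : Matrix (Fin (m+1)) (Fin (m+1)) ℝ) :
    M⁻¹ (Fin.last m) (Fin.last m) = (M.submatrix Fin.castSucc Fin.castSucc).det / M.det := by
  have hadj : M.adjugate (Fin.last m) (Fin.last m)
      = (M.submatrix Fin.castSucc Fin.castSucc).det := by
    rw [Matrix.adjugate_apply]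
    set A := M.updateRow (Fin.last m) (Pi.single (Fin.last m) 1) with hA
    rw [Matrix.det_succ_row A (Fin.last m)]
    rw [Finset.sum_eq_single_of_mem (Fin.last m) (Finset.mem_univ _)]
    · have h1 : A (Fin.last m) (Fin.last m) = 1 := by
        rw [hA, Matrix.updateRow_self, Pi.single_eq_same]
      have h2 : A.submatrix (Fin.last m).succAbove (Fin.last m).succAbove
          = M.submatrix Fin.castSucc Fin.castSucc := by
        rw [Fin.succAbove_last]
        ext i j
        simp only [Matrix.submatrix_apply]
        rw [hA, Matrix.updateRow_ne (ne_of_lt (Fin.castSucc_lt_last i))]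
      rw [h1, h2, Fin.val_last]
      have : ((-1 : ℝ)) ^ (m + m) = 1 := Even.neg_one_pow ⟨m, rfl⟩
      rw [this, one_mul, one_mul]
    · intro j _ hj
      have : A (Fin.last m) j = 0 := by
        rw [hA, Matrix.updateRow_self, Pi.single_eq_of_ne hj]
      rw [this, mul_zero, zero_mul]
  rw [Matrix.inv_def, Matrix.smul_apply, smul_eq_mul, Ring.inverse_eq_inv', hadj,
    div_eq_inv_mul]


lemma part2_main {m : ℕ} (M : Matrix (Fin (m + 1)) (Fin (m + 1)) ℝ)
    (H : Matrix (Fin m) (Fin m) ℝ) (V : Fin m → ℝ) (S : ℝ)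
    (hH : H = M.submatrix Fin.castSucc Fin.castSucc)
    (hV : ∀ i : Fin m, V i = M (Fin.last m) i.castSucc)
    (hS : S = M (Fin.last m) (Fin.last m))
    (hd : M.det ≠ 0) :
    |H.det| * |S| * (1 + Real.sqrt (∑ i, V i ^ 2) / smin M)⁻¹ ≤ |M.det| := by
  have hdet_unit : IsUnit M.det := isUnit_iff_ne_zero.2 hd
  -- smin M > 0
  have hsmin_pos : 0 < smin M := by
    have hPD : (Mᴴ * M).PosDef := by
      refine Matrix.PosDef.of_dotProduct_mulVec_pos (Matrix.isHermitian_conjTranspose_mul_self M) fun x hx => ?_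
      have hMx : M *ᵥ x ≠ 0 := by
        intro h0
        apply hx
        have := congrArg (fun v => M⁻¹ *ᵥ v) h0
        simpa [Matrix.mulVec_mulVec, Matrix.nonsing_inv_mul M hdet_unit,
          Matrix.one_mulVec] using this
      have h1 : star x ⬝ᵥ ((Mᴴ * M) *ᵥ x) = (M *ᵥ x) ⬝ᵥ (M *ᵥ x) := by
        rw [star_trivial, ← Matrix.mulVec_mulVec, Matrix.dotProduct_mulVec x,
          Matrix.conjTranspose_eq_transpose_of_trivial, ← Matrix.mulVec_transpose,
          Matrix.transpose_transpose]
      rw [h1]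
      rcases (lt_or_eq_of_le (Finset.sum_nonneg fun i _ =>
        mul_self_nonneg ((M *ᵥ x) i)) : (0:ℝ) < _ ∨ _) with h | h
      · exact h
      · exact absurd (dotProduct_self_eq_zero.mp h.symm) hMx
    obtain ⟨i, hi, -⟩ := smin_eq M
    rw [hi, sval, svalAsc, Real.sqrt_pos]
    exact hPD.eigenvalues_pos _
  -- the vector x = M⁻¹ e
  set e : Fin (m + 1) → ℝ := Pi.single (Fin.last m) 1 with he
  set x : Fin (m + 1) → ℝ := M⁻¹ *ᵥ e with hx
  have hMx : M *ᵥ x = e := by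
    rw [hx, Matrix.mulVec_mulVec, Matrix.mul_nonsing_inv M hdet_unit, Matrix.one_mulVec]
  have hxlast : x (Fin.last m) = H.det / M.det := by
    have : x (Fin.last m) = M⁻¹ (Fin.last m) (Fin.last m) := by
      rw [hx, he]
      simp [Matrix.mulVec_single]
    rw [this, inv_corner, hH]
  have hee : e ⬝ᵥ e = 1 := by
    rw [he]
    simp [dotProduct, Pi.single_apply]
  have hxx : x ⬝ᵥ x ≤ (smin M)⁻¹ ^ 2 := by
    have hr := rayleigh M x
    rw [hMx, hee] at hr
    rw [inv_pow, ← one_div, le_div_iff₀ (by positivity)]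
    nlinarith [hr]
  -- the last coordinate of M *ᵥ x
  have hlast1 : (∑ i, V i * x i.castSucc) + S * x (Fin.last m) = 1 := by
    have h1 : (M *ᵥ x) (Fin.last m) = 1 := by rw [hMx, he, Pi.single_eq_same]
    rw [← h1, Matrix.mulVec, dotProduct, Fin.sum_univ_castSucc]
    congr 1
    · exact Finset.sum_congr rfl fun i _ => by rw [hV i]
    · rw [hS]
  set q := ∑ i, V i ^ 2 with hq
  have hq0 : 0 ≤ q := Finset.sum_nonneg fun i _ => sq_nonneg _
  set T := ∑ i, V i * x i.castSucc with hT
  have hT2 : T ^ 2 ≤ q * (smin M)⁻¹ ^ 2 := by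
    have hcs := Finset.sum_mul_sq_le_sq_mul_sq Finset.univ V (fun i : Fin m => x i.castSucc)
    have hsub : (∑ i : Fin m, x i.castSucc ^ 2) ≤ x ⬝ᵥ x := by
      have hsplit : x ⬝ᵥ x = (∑ i : Fin m, x i.castSucc ^ 2) + x (Fin.last m) ^ 2 := by
        rw [dotProduct, Fin.sum_univ_castSucc]
        congr 1
        · exact Finset.sum_congr rfl fun i _ => by ring
        · ring
      nlinarith [sq_nonneg (x (Fin.last m))]
    calc T ^ 2 ≤ q * ∑ i : Fin m, x i.castSucc ^ 2 := hcs
      _ ≤ q * (smin M)⁻¹ ^ 2 := by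
          apply mul_le_mul_of_nonneg_left _ hq0
          exact le_trans hsub hxx
  have hTabs : |T| ≤ Real.sqrt q * (smin M)⁻¹ := by
    have h1 : |T| = Real.sqrt (T ^ 2) := (Real.sqrt_sq_eq_abs T).symm
    have h2 : Real.sqrt (T ^ 2) ≤ Real.sqrt (q * (smin M)⁻¹ ^ 2) := Real.sqrt_le_sqrt hT2
    rw [h1]
    refine le_trans h2 ?_
    rw [Real.sqrt_mul hq0, Real.sqrt_sq (by positivity)]
  have hdivnn : 0 ≤ Real.sqrt q / smin M := div_nonneg (Real.sqrt_nonneg q) hsmin_pos.le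
  have hKpos : 0 < 1 + Real.sqrt q / smin M := by linarith
  have hkey : |S * x (Fin.last m)| ≤ 1 + Real.sqrt q / smin M := by
    have hrw : S * x (Fin.last m) = 1 - T := by linarith [hlast1]
    rw [hrw]
    have h1 : |1 - T| ≤ 1 + |T| := by
      calc |1 - T| ≤ |(1:ℝ)| + |T| := abs_sub _ _
        _ = 1 + |T| := by rw [abs_one]
    have h2 : Real.sqrt q * (smin M)⁻¹ = Real.sqrt q / smin M := by
      rw [div_eq_mul_inv]
    linarith [hTabs]
  -- conclude
  have hMd : 0 < |M.det| := abs_pos.mpr hd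
  have hmain : |H.det| * |S| ≤ (1 + Real.sqrt q / smin M) * |M.det| := by
    have h1 : |S * x (Fin.last m)| * |M.det| ≤ (1 + Real.sqrt q / smin M) * |M.det| :=
      mul_le_mul_of_nonneg_right hkey hMd.le
    have h2 : |S * x (Fin.last m)| * |M.det| = |H.det| * |S| := by
      rw [hxlast, abs_mul, abs_div]
      field_simp
    linarith [h2 ▸ h1]
  calc |H.det| * |S| * (1 + Real.sqrt q / smin M)⁻¹
      ≤ ((1 + Real.sqrt q / smin M) * |M.det|) * (1 + Real.sqrt q / smin M)⁻¹ :=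
        mul_le_mul_of_nonneg_right hmain (by positivity)
    _ = |M.det| := by field_simp

set_option maxHeartbeats 1000000 in
lemma part1_main {m : ℕ} (M : Matrix (Fin (m + 1)) (Fin (m + 1)) ℝ)
    (H : Matrix (Fin m) (Fin m) ℝ) (W V : Fin m → ℝ) (S : ℝ)
    (hH : H = M.submatrix Fin.castSucc Fin.castSucc)
    (hW : ∀ i : Fin m, W i = M i.castSucc (Fin.last m))
    (hV : ∀ i : Fin m, V i = M (Fin.last m) i.castSucc)
    (hS : S = M (Fin.last m) (Fin.last m))
    {ε : ℝ} (hε : 0 < ε) :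
    |M.det| ≤ ε⁻¹ * Real.sqrt ((∑ i, W i ^ 2) + S ^ 2) *
      (Real.sqrt (∑ i, V i ^ 2) + ε) * ∏ i, max (sval H i) ε := by
  set Wb : Matrix (Fin m) (Fin 1) ℝ := Matrix.replicateCol (Fin 1) W with hWb
  set Vb : Matrix (Fin 1) (Fin m) ℝ := Matrix.replicateRow (Fin 1) V with hVb
  set Sb : Matrix (Fin 1) (Fin 1) ℝ := Matrix.of fun _ _ => S with hSb
  set N : Matrix (Fin m ⊕ Fin 1) (Fin m ⊕ Fin 1) ℝ := Matrix.fromBlocks H Wb Vb Sb with hN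
  have hinr : ∀ j : Fin 1, (finSumFinEquiv : Fin m ⊕ Fin 1 ≃ Fin (m+1)) (Sum.inr j)
      = Fin.last m := by
    intro j
    have hj : j = 0 := Subsingleton.elim _ _
    subst hj
    apply Fin.ext
    simp [finSumFinEquiv_apply_right, Fin.natAdd, Fin.last]
  have hinl : ∀ i : Fin m, (finSumFinEquiv : Fin m ⊕ Fin 1 ≃ Fin (m+1)) (Sum.inl i)
      = i.castSucc := fun i => rfl
  have hsub : M.submatrix (finSumFinEquiv : Fin m ⊕ Fin 1 ≃ Fin (m+1))
      (finSumFinEquiv : Fin m ⊕ Fin 1 ≃ Fin (m+1)) = N := by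
    ext i j
    cases i with
    | inl i =>
      cases j with
      | inl j => simp [hN, Matrix.submatrix_apply, hinl, hH]
      | inr j => simp [hN, hWb, Matrix.submatrix_apply, hinl, hinr, hW i]
    | inr i =>
      cases j with
      | inl j => simp [hN, hVb, Matrix.submatrix_apply, hinl, hinr, hV j]
      | inr j => simp [hN, hSb, Matrix.submatrix_apply, hinr, hS]
  have hdetN : N.det = M.det := by
    rw [← hsub]
    exact Matrix.det_submatrix_equiv_self _ _
  -- positivity of the product
  have hPpos : 0 < ∏ i, max (sval H i) ε :=
    Finset.prod_pos fun i _ => lt_max_of_lt_right hε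
  set q := ∑ i, V i ^ 2 with hq
  set r := (∑ i, W i ^ 2) + S ^ 2 with hr
  have hq0 : (0:ℝ) ≤ q := Finset.sum_nonneg fun i _ => sq_nonneg _
  have hr0 : (0:ℝ) ≤ r := by
    apply add_nonneg (Finset.sum_nonneg fun i _ => sq_nonneg _) (sq_nonneg _)
  by_cases hd : M.det = 0
  · rw [hd, abs_zero]
    have h1 : 0 ≤ Real.sqrt q := Real.sqrt_nonneg _
    positivity
  -- main case
  set A : Matrix (Fin m) (Fin m) ℝ := Hᵀ * H + Matrix.vecMulVec V V with hA
  have hrowt : Vbᵀ * Vb = Matrix.vecMulVec V V := by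
    rw [hVb, Matrix.transpose_replicateRow]; exact (Matrix.vecMulVec_eq (Fin 1) V V).symm
  set Bm : Matrix (Fin m) (Fin 1) ℝ := Hᵀ * Wb + Vbᵀ * Sb with hBm
  set Dm : Matrix (Fin 1) (Fin 1) ℝ := Wbᵀ * Wb + Sbᵀ * Sb with hDm
  have hC : Wbᵀ * H + Sbᵀ * Vb = Bmᵀ := by
    rw [hBm]
    simp only [Matrix.transpose_add, Matrix.transpose_mul, Matrix.transpose_transpose]
  have hNtN : Nᵀ * N = Matrix.fromBlocks A Bm Bmᵀ Dm := by
    rw [hN, Matrix.fromBlocks_transpose, Matrix.fromBlocks_multiply, hrowt, hC]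
  -- A is positive definite
  have hdotsq : ∀ (x : Fin m → ℝ), x ⬝ᵥ (A *ᵥ x)
      = (H *ᵥ x) ⬝ᵥ (H *ᵥ x) + (V ⬝ᵥ x) ^ 2 := by
    intro x
    rw [hA, Matrix.add_mulVec, dotProduct_add]
    congr 1
    · rw [← Matrix.mulVec_mulVec, Matrix.dotProduct_mulVec x, Matrix.vecMul_transpose]
    · have h1 : Matrix.vecMulVec V V *ᵥ x = (V ⬝ᵥ x) • V := by
        ext i
        simp [Matrix.vecMulVec_apply, Matrix.mulVec, dotProduct, Finset.mul_sum,
          mul_comm, mul_assoc, mul_left_comm]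
      rw [h1, dotProduct_smul, smul_eq_mul, dotProduct_comm]
      ring
  have hApd : A.PosDef := by
    refine Matrix.PosDef.of_dotProduct_mulVec_pos ?_ ?_
    · have hAt : Aᵀ = A := by
        rw [hA, Matrix.transpose_add, Matrix.transpose_mul, Matrix.transpose_transpose]
        congr 1
        ext i j
        simp [Matrix.vecMulVec_apply, mul_comm]
      rw [Matrix.IsHermitian, Matrix.conjTranspose_eq_transpose_of_trivial, hAt]
    · intro x hx
      rw [star_trivial, hdotsq x]
      have h1 : 0 ≤ (H *ᵥ x) ⬝ᵥ (H *ᵥ x) := Finset.sum_nonneg fun i _ => mul_self_nonneg _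
      have h2 : 0 ≤ (V ⬝ᵥ x) ^ 2 := sq_nonneg _
      rcases lt_or_eq_of_le (add_nonneg h1 h2) with h | h
      · exact h
      exfalso
      have hHx : H *ᵥ x = 0 := by
        apply dotProduct_self_eq_zero.mp
        nlinarith
      have hVx : V ⬝ᵥ x = 0 := by nlinarith
      have hNx : N *ᵥ Sum.elim x 0 = 0 := by
        rw [hN, Matrix.fromBlocks_mulVec]
        have hcl : (Sum.elim x (0 : Fin 1 → ℝ)) ∘ Sum.inl = x := rfl
        have hcr : (Sum.elim x (0 : Fin 1 → ℝ)) ∘ Sum.inr = 0 := rfl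
        rw [hcl, hcr, Matrix.mulVec_zero, Matrix.mulVec_zero, hHx]
        have hVbx : Vb *ᵥ x = 0 := by
          ext u
          simpa [hVb, Matrix.mulVec, dotProduct] using hVx
        rw [hVbx]
        ext u
        cases u <;> simp
      have hNunit : IsUnit N.det := by rw [hdetN]; exact isUnit_iff_ne_zero.2 hd
      have : Sum.elim x (0 : Fin 1 → ℝ) = 0 := by
        have := congrArg (fun v => N⁻¹ *ᵥ v) hNx
        simpa [Matrix.mulVec_mulVec, Matrix.nonsing_inv_mul N hNunit,
          Matrix.one_mulVec] using this
      apply hx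
      funext i
      exact congrFun this (Sum.inl i)
  have hAunit : IsUnit A.det := isUnit_iff_ne_zero.2 hApd.det_pos.ne'
  have hAinv : Invertible A := A.invertibleOfIsUnitDet hAunit
  -- Schur complement bound
  have hdet2 : M.det ^ 2 = A.det * ((Dm - Bmᵀ * A⁻¹ * Bm) 0 0) := by
    have h1 : (Nᵀ * N).det = M.det ^ 2 := by
      rw [Matrix.det_mul, Matrix.det_transpose, hdetN, sq]
    have h2 := Matrix.det_fromBlocks₁₁ A Bm Bmᵀ Dm
    rw [hNtN, h2, Matrix.invOf_eq_nonsing_inv] at h1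
    rw [← h1]
    congr 1
    exact Matrix.det_fin_one _
  have hD00 : Dm 0 0 = r := by
    rw [hDm, hr]
    simp [hWb, hSb, Matrix.mul_apply, Matrix.transpose_apply, sq, Fin.sum_univ_one]
  have hq00 : 0 ≤ (Bmᵀ * A⁻¹ * Bm) 0 0 := by
    set z : Fin m → ℝ := fun j => Bm j 0 with hz
    have hform : (Bmᵀ * A⁻¹ * Bm) 0 0 = z ⬝ᵥ (A⁻¹ *ᵥ z) := by
      calc (Bmᵀ * A⁻¹ * Bm) 0 0 = ∑ k, (∑ j, z j * A⁻¹ j k) * z k := by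
            rw [Matrix.mul_apply]
            refine Finset.sum_congr rfl fun k _ => ?_
            rw [Matrix.mul_apply]
            rfl
        _ = ∑ j, z j * ∑ k, A⁻¹ j k * z k := by
            simp only [Finset.sum_mul, Finset.mul_sum]
            rw [Finset.sum_comm]
            exact Finset.sum_congr rfl fun j _ => Finset.sum_congr rfl fun k _ => by ring
        _ = z ⬝ᵥ (A⁻¹ *ᵥ z) := rfl
    rw [hform]
    have := (hApd.inv).posSemidef.dotProduct_mulVec_nonneg z
    rwa [star_trivial] at this
  have hdetA_le : A.det ≤ (∏ i, max (sval H i) ε) ^ 2 * (1 + q / ε ^ 2) := by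
    have hk := key1 H V hε
    rw [Matrix.conjTranspose_eq_transpose_of_trivial] at hk
    rw [hA, hq]
    exact hk
  have hfinal : M.det ^ 2 ≤ (∏ i, max (sval H i) ε) ^ 2 * (1 + q / ε ^ 2) * r := by
    have h1 : M.det ^ 2 ≤ A.det * r := by
      rw [hdet2]
      apply mul_le_mul_of_nonneg_left _ hApd.det_pos.le
      rw [Matrix.sub_apply]
      rw [hD00] at *
      linarith [hq00]
    refine le_trans h1 ?_
    exact mul_le_mul_of_nonneg_right hdetA_le hr0
  -- endgame
  set P := ∏ i, max (sval H i) ε with hP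
  have hone : 1 + q / ε ^ 2 ≤ ((Real.sqrt q + ε) / ε) ^ 2 := by
    rw [div_pow, le_div_iff₀ (by positivity)]
    have hdc : q / ε ^ 2 * ε ^ 2 = q := div_mul_cancel₀ q (by positivity)
    nlinarith [Real.sq_sqrt hq0, Real.sqrt_nonneg q, hdc]
  have hfin2 : M.det ^ 2 ≤ (ε⁻¹ * Real.sqrt r * (Real.sqrt q + ε) * P) ^ 2 := by
    have hR2 : (ε⁻¹ * Real.sqrt r * (Real.sqrt q + ε) * P) ^ 2
        = P ^ 2 * ((Real.sqrt q + ε) / ε) ^ 2 * r := by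
      calc (ε⁻¹ * Real.sqrt r * (Real.sqrt q + ε) * P) ^ 2
          = Real.sqrt r ^ 2 * ((Real.sqrt q + ε) ^ 2 / ε ^ 2) * P ^ 2 := by ring
        _ = P ^ 2 * ((Real.sqrt q + ε) / ε) ^ 2 * r := by
            rw [Real.sq_sqrt hr0, div_pow]; ring
    rw [hR2]
    refine le_trans hfinal ?_
    apply mul_le_mul_of_nonneg_right _ hr0
    exact mul_le_mul_of_nonneg_left hone (by positivity)
  have hRnn : 0 ≤ ε⁻¹ * Real.sqrt r * (Real.sqrt q + ε) * P := by
    have h1 : 0 ≤ Real.sqrt q := Real.sqrt_nonneg _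
    have h2 : 0 ≤ Real.sqrt r := Real.sqrt_nonneg _
    positivity
  calc |M.det| = Real.sqrt (M.det ^ 2) := (Real.sqrt_sq_eq_abs _).symm
    _ ≤ Real.sqrt ((ε⁻¹ * Real.sqrt r * (Real.sqrt q + ε) * P) ^ 2) :=
        Real.sqrt_le_sqrt hfin2
    _ = ε⁻¹ * Real.sqrt r * (Real.sqrt q + ε) * P := Real.sqrt_sq hRnn

end Aux

/-- Lemma 4.1 of the paper: deterministic upper and lower bounds for the
determinant of a matrix in terms of the block decomposition `M = [[H, W],[Vᵀ, S]]`. Here `M`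
is an `(m+1)×(m+1)` matrix with `m ≥ 1`, `H` its top-left `m×m` block, `W` its last column,
`V` its last row (without the corner), and `S` its corner entry. -/
theorem statement17
    (m : ℕ) (hm : 1 ≤ m) (M : Matrix (Fin (m + 1)) (Fin (m + 1)) ℝ)
    (H : Matrix (Fin m) (Fin m) ℝ) (W V : Fin m → ℝ) (S : ℝ)
    (hH : H = M.submatrix Fin.castSucc Fin.castSucc)
    (hW : ∀ i : Fin m, W i = M i.castSucc (Fin.last m))
    (hV : ∀ i : Fin m, V i = M (Fin.last m) i.castSucc)
    (hS : S = M (Fin.last m) (Fin.last m)) :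
    (∀ ε > (0 : ℝ),
      |M.det| ≤ ε⁻¹ * Real.sqrt ((∑ i, W i ^ 2) + S ^ 2) *
        (Real.sqrt (∑ i, V i ^ 2) + ε) * ∏ i, max (sval H i) ε) ∧
    (M.det ≠ 0 →
      |H.det| * |S| * (1 + Real.sqrt (∑ i, V i ^ 2) / smin M)⁻¹ ≤ |M.det|) := by
  constructor
  · intro ε hε
    exact part1_main M H W V S hH hW hV hS hε
  · intro hd
    exact part2_main M H V S hH hV hS hd

end
end
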